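/- Let p be a prime and let k ≥ 4 be an even integer. For every z in the upper half-plane ℍ, E*_{k,p}(z) = (1/2)·Σ_{(c,d)∈ℤ², gcd(c,d)=1, p ∣ c} (cz+d)^{−k} + (p^{k/2}/2)·Σ_{(c,d)∈ℤ², gcd(c,d)=1, p ∣ d} (c·(pz)+d)^{−k}; that is, E*_{k,p} coincides with the Eisenstein series of the Fricke group Γ₀*(p) attached to the cusp ∞. -/

import Mathlib

open Complex

/- ## Auxiliary definitions and lemmas -/

noncomputable def fz (k : ℕ) (z : ℂ) (q : ℤ × ℤ) : ℂ :=
  ((q.1 : ℂ) * z + (q.2 : ℂ)) ^ (-(k : ℤ))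

lemma summable_fz (k : ℕ) (hk : 4 ≤ k) (z : ℂ) (hz : 0 < z.im) : Summable (fz k z) := by
  have h3 : (3 : ℤ) ≤ (k : ℤ) := by exact_mod_cast (by omega : 3 ≤ k)
  have h := (EisensteinSeries.summable_norm_eisSummand h3 ⟨z, hz⟩).of_norm
  rw [← (finTwoArrowEquiv ℤ).summable_iff]
  exact h.congr fun v => by
    simp [fz, EisensteinSeries.eisSummand, finTwoArrowEquiv, UpperHalfPlane.coe]

lemma tsum_split {g : ℤ × ℤ → ℂ} (hg : Summable g) (P Q : ℤ × ℤ → Prop) :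
    ∑' x : {q : ℤ × ℤ // P q}, g x =
      ∑' x : {q : ℤ × ℤ // P q ∧ Q q}, g x + ∑' x : {q : ℤ × ℤ // P q ∧ ¬Q q}, g x := by
  classical
  have hU : {q : ℤ × ℤ | P q ∧ Q q} ∪ {q | P q ∧ ¬Q q} = {q | P q} := by
    ext q; by_cases h : Q q <;> simp [h]
  have hd : Disjoint {q : ℤ × ℤ | P q ∧ Q q} {q | P q ∧ ¬Q q} := by
    rw [Set.disjoint_left]; rintro q ⟨_, h⟩ ⟨_, h'⟩; exact h' h
  show ∑' x : ↥{q : ℤ × ℤ | P q}, g x =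
      ∑' x : ↥{q : ℤ × ℤ | P q ∧ Q q}, g x + ∑' x : ↥{q : ℤ × ℤ | P q ∧ ¬Q q}, g x
  rw [tsum_subtype {q : ℤ × ℤ | P q} g, tsum_subtype {q : ℤ × ℤ | P q ∧ Q q} g,
    tsum_subtype {q : ℤ × ℤ | P q ∧ ¬Q q} g, ← hU,
    Set.indicator_union_of_disjoint hd, Summable.tsum_add (hg.indicator _) (hg.indicator _)]

/-- `(c,d) ↦ (p*c, d)` : coprime pairs with `p ∤ d` ≃ coprime pairs with `p ∣ c`. -/
def eC {p : ℕ} (hp : p.Prime) :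
    {q : ℤ × ℤ // Int.gcd q.1 q.2 = 1 ∧ ¬(p : ℤ) ∣ q.2} ≃
    {q : ℤ × ℤ // Int.gcd q.1 q.2 = 1 ∧ (p : ℤ) ∣ q.1} where
  toFun q := ⟨((p : ℤ) * q.1.1, q.1.2), by
    obtain ⟨⟨c, d⟩, hg, hnd⟩ := q
    have hpz : Prime (p : ℤ) := Nat.prime_iff_prime_int.mp hp
    refine ⟨?_, dvd_mul_right _ _⟩
    rw [← Int.isCoprime_iff_gcd_eq_one] at hg ⊢
    exact (hpz.coprime_iff_not_dvd.mpr hnd).mul_left hg⟩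
  invFun q := ⟨(q.1.1 / (p : ℤ), q.1.2), by
    obtain ⟨⟨c, d⟩, hg, hdc⟩ := q
    have hpz : Prime (p : ℤ) := Nat.prime_iff_prime_int.mp hp
    rw [← Int.isCoprime_iff_gcd_eq_one] at hg ⊢
    have hdvd : c / (p : ℤ) ∣ c := ⟨(p : ℤ), (Int.ediv_mul_cancel hdc).symm⟩
    refine ⟨hg.of_isCoprime_of_dvd_left hdvd, fun hpd => ?_⟩
    exact hpz.not_unit (hg.isUnit_of_dvd' hdc hpd)⟩
  left_inv q := by
    ext
    · exact Int.mul_ediv_cancel_left _ (by exact_mod_cast hp.ne_zero)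
    · rfl
  right_inv q := by
    ext
    · exact Int.mul_ediv_cancel' q.2.2
    · rfl

/-- `(c,d) ↦ (c, p*d)` : coprime pairs with `p ∤ c` ≃ coprime pairs with `p ∣ d`. -/
def eD {p : ℕ} (hp : p.Prime) :
    {q : ℤ × ℤ // Int.gcd q.1 q.2 = 1 ∧ ¬(p : ℤ) ∣ q.1} ≃
    {q : ℤ × ℤ // Int.gcd q.1 q.2 = 1 ∧ (p : ℤ) ∣ q.2} where
  toFun q := ⟨(q.1.1, (p : ℤ) * q.1.2), by
    obtain ⟨⟨c, d⟩, hg, hnc⟩ := q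
    have hpz : Prime (p : ℤ) := Nat.prime_iff_prime_int.mp hp
    refine ⟨?_, dvd_mul_right _ _⟩
    rw [← Int.isCoprime_iff_gcd_eq_one] at hg ⊢
    exact IsCoprime.mul_right (hpz.coprime_iff_not_dvd.mpr hnc).symm hg⟩
  invFun q := ⟨(q.1.1, q.1.2 / (p : ℤ)), by
    obtain ⟨⟨c, d⟩, hg, hdd⟩ := q
    have hpz : Prime (p : ℤ) := Nat.prime_iff_prime_int.mp hp
    rw [← Int.isCoprime_iff_gcd_eq_one] at hg ⊢
    have hdvd : d / (p : ℤ) ∣ d := ⟨(p : ℤ), (Int.ediv_mul_cancel hdd).symm⟩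
    refine ⟨hg.of_isCoprime_of_dvd_right hdvd, fun hpc => ?_⟩
    exact hpz.not_unit (hg.isUnit_of_dvd' hpc hdd)⟩
  left_inv q := by
    ext
    · rfl
    · exact Int.mul_ediv_cancel_left _ (by exact_mod_cast hp.ne_zero)
  right_inv q := by
    ext
    · rfl
    · exact Int.mul_ediv_cancel' q.2.2

/- ## The statement -/

/-- The weight-`k` Eisenstein series for `SL₂(ℤ)`:
`E_k(z) = (1/2) ∑_{(c,d) coprime} (cz+d)^{-k}`. -/
noncomputable def Ek (k : ℕ) (z : ℂ) : ℂ :=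
  (1 / 2) * ∑' q : {q : ℤ × ℤ // Int.gcd q.1 q.2 = 1},
    (((q : ℤ × ℤ).1 : ℂ) * z + ((q : ℤ × ℤ).2 : ℂ)) ^ (-(k : ℤ))

/-- The Eisenstein series associated with the Fricke group `Γ₀*(p)`:
`E*_{k,p}(z) = (p^{k/2} E_k(pz) + E_k(z)) / (p^{k/2} + 1)`. -/
noncomputable def EkStar (k p : ℕ) (z : ℂ) : ℂ :=
  ((p : ℂ) ^ (k / 2) * Ek k ((p : ℂ) * z) + Ek k z) / ((p : ℂ) ^ (k / 2) + 1)

theorem stmt2 (p : ℕ) (hp : p.Prime) (k : ℕ) (hk : 4 ≤ k) (hke : Even k)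
    (z : ℂ) (hz : 0 < z.im) :
    EkStar k p z =
      (1 / 2) * ∑' q : {q : ℤ × ℤ // Int.gcd q.1 q.2 = 1 ∧ (p : ℤ) ∣ q.1},
        (((q : ℤ × ℤ).1 : ℂ) * z + ((q : ℤ × ℤ).2 : ℂ)) ^ (-(k : ℤ)) +
      ((p : ℂ) ^ (k / 2) / 2) * ∑' q : {q : ℤ × ℤ // Int.gcd q.1 q.2 = 1 ∧ (p : ℤ) ∣ q.2},
        (((q : ℤ × ℤ).1 : ℂ) * ((p : ℂ) * z) + ((q : ℤ × ℤ).2 : ℂ)) ^ (-(k : ℤ)) := by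
  have hp0 : (p : ℂ) ≠ 0 := by exact_mod_cast hp.ne_zero
  have hzp : 0 < ((p : ℂ) * z).im := by
    have : ((p : ℂ) * z).im = (p : ℝ) * z.im := by simp
    rw [this]
    exact mul_pos (by exact_mod_cast hp.pos) hz
  have hs : Summable (fz k z) := summable_fz k hk z hz
  have hsp : Summable (fz k ((p : ℂ) * z)) := summable_fz k hk _ hzp
  -- notation
  set Sinf : ℂ := ∑' q : {q : ℤ × ℤ // Int.gcd q.1 q.2 = 1 ∧ (p : ℤ) ∣ q.1},
    (((q : ℤ × ℤ).1 : ℂ) * z + ((q : ℤ × ℤ).2 : ℂ)) ^ (-(k : ℤ)) with hSinf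
  set S0 : ℂ := ∑' q : {q : ℤ × ℤ // Int.gcd q.1 q.2 = 1 ∧ (p : ℤ) ∣ q.2},
    (((q : ℤ × ℤ).1 : ℂ) * ((p : ℂ) * z) + ((q : ℤ × ℤ).2 : ℂ)) ^ (-(k : ℤ)) with hS0
  -- the sum over (p ∤ c) equals p^k * S0
  have key1 : (∑' x : {q : ℤ × ℤ // Int.gcd q.1 q.2 = 1 ∧ ¬(p : ℤ) ∣ q.1}, fz k z x)
      = (p : ℂ) ^ (k : ℤ) * S0 := by
    have hS0' : S0 = ∑' q : {q : ℤ × ℤ // Int.gcd q.1 q.2 = 1 ∧ (p : ℤ) ∣ q.2},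
        fz k ((p : ℂ) * z) q := rfl
    rw [hS0', ← Equiv.tsum_eq (eD hp) (fun q => fz k ((p : ℂ) * z) q), ← tsum_mul_left]
    refine tsum_congr fun x => ?_
    obtain ⟨⟨c, d⟩, hg, hnc⟩ := x
    show ((c : ℂ) * z + d) ^ (-(k : ℤ))
      = (p : ℂ) ^ (k : ℤ) * ((c : ℂ) * ((p : ℂ) * z) + ((((p : ℤ) * d : ℤ)) : ℂ)) ^ (-(k : ℤ))
    push_cast
    have : (c : ℂ) * ((p : ℂ) * z) + (p : ℂ) * d = (p : ℂ) * ((c : ℂ) * z + d) := by ring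
    rw [this, mul_zpow, ← mul_assoc, ← zpow_add₀ hp0]
    simp
  -- the sum over (p ∤ d) of fz k (p*z) equals Sinf
  have key2 : (∑' x : {q : ℤ × ℤ // Int.gcd q.1 q.2 = 1 ∧ ¬(p : ℤ) ∣ q.2},
      fz k ((p : ℂ) * z) x) = Sinf := by
    have hSinf' : Sinf = ∑' q : {q : ℤ × ℤ // Int.gcd q.1 q.2 = 1 ∧ (p : ℤ) ∣ q.1},
        fz k z q := rfl
    rw [hSinf', ← Equiv.tsum_eq (eC hp) (fun q => fz k z q)]
    refine tsum_congr fun x => ?_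
    obtain ⟨⟨c, d⟩, hg, hnd⟩ := x
    show ((c : ℂ) * ((p : ℂ) * z) + d) ^ (-(k : ℤ))
      = (((((p : ℤ) * c : ℤ)) : ℂ) * z + d) ^ (-(k : ℤ))
    push_cast
    ring_nf
  -- split the two full sums
  have split1 := tsum_split hs (fun q => Int.gcd q.1 q.2 = 1) (fun q => (p : ℤ) ∣ q.1)
  have split2 := tsum_split hsp (fun q => Int.gcd q.1 q.2 = 1) (fun q => (p : ℤ) ∣ q.2)
  have hEz : Ek k z = (1 / 2) * (Sinf + (p : ℂ) ^ (k : ℤ) * S0) := by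
    rw [Ek]
    congr 1
    rw [show (∑' q : {q : ℤ × ℤ // Int.gcd q.1 q.2 = 1},
      (((q : ℤ × ℤ).1 : ℂ) * z + ((q : ℤ × ℤ).2 : ℂ)) ^ (-(k : ℤ)))
      = ∑' q : {q : ℤ × ℤ // Int.gcd q.1 q.2 = 1}, fz k z q from rfl, split1, ← key1]
    rfl
  have hEpz : Ek k ((p : ℂ) * z) = (1 / 2) * (S0 + Sinf) := by
    rw [Ek]
    congr 1
    rw [show (∑' q : {q : ℤ × ℤ // Int.gcd q.1 q.2 = 1},
      (((q : ℤ × ℤ).1 : ℂ) * ((p : ℂ) * z) + ((q : ℤ × ℤ).2 : ℂ)) ^ (-(k : ℤ)))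
      = ∑' q : {q : ℤ × ℤ // Int.gcd q.1 q.2 = 1}, fz k ((p : ℂ) * z) q from rfl, split2, ← key2]
    rfl
  -- final algebra
  have hP : (p : ℂ) ^ (k : ℤ) = (p : ℂ) ^ (k / 2) * (p : ℂ) ^ (k / 2) := by
    obtain ⟨m, hm⟩ := hke
    subst hm
    rw [zpow_natCast, ← pow_add]
    congr 1
    omega
  have hpR : (0 : ℝ) < (p : ℝ) := by exact_mod_cast hp.pos
  have hPpos : (0 : ℝ) < (p : ℝ) ^ (k / 2) := by positivity
  have hP1 : (p : ℂ) ^ (k / 2) + 1 ≠ 0 := by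
    intro h
    have : ((p : ℝ) ^ (k / 2) + 1 : ℂ) = 0 := by push_cast at h ⊢; exact h
    have h2 : (p : ℝ) ^ (k / 2) + 1 = 0 := by exact_mod_cast this
    linarith
  rw [EkStar, hEz, hEpz, hP]
  field_simp
  ring
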